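/- Every (d,λ)-expander graph G satisfies κ(G) ≥ (1 − λ)d, where κ(G) is the vertex connectivity. -/

import Mathlib

open Matrix Finset

/-- An orthonormal eigenbasis of a real symmetric matrix, with eigenvalues listed in
decreasing order (with multiplicity). -/
def EigSystem {ι : Type} [Fintype ι] {k : ℕ} (M : Matrix ι ι ℝ)
    (μ : Fin k → ℝ) (φ : Fin k → ι → ℝ) : Prop :=
  Fintype.card ι = k ∧
  (∀ a b, ∑ i, φ a i * φ b i = if a = b then (1 : ℝ) else 0) ∧
  (∀ a, M.mulVec (φ a) = μ a • φ a) ∧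
  (∀ a b : Fin k, a ≤ b → μ b ≤ μ a)


lemma orth_complete {n : ℕ} (φ : Fin n → Fin n → ℝ)
    (h : ∀ a b, ∑ i, φ a i * φ b i = if a = b then (1 : ℝ) else 0) :
    ∀ i j, ∑ a, φ a i * φ a j = if i = j then (1 : ℝ) else 0 := by
  have hP : (Matrix.of φ) * (Matrix.of φ)ᵀ = 1 := by
    ext a b
    simp [Matrix.mul_apply, Matrix.one_apply, h a b]
  have hP' : (Matrix.of φ)ᵀ * (Matrix.of φ) = 1 := mul_eq_one_comm.mp hP
  intro i j
  have := congrFun (congrFun hP' i) j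
  simpa [Matrix.mul_apply, Matrix.one_apply, mul_comm] using this

lemma norm_decomp {n : ℕ} (φ : Fin n → Fin n → ℝ)
    (horth : ∀ a b, ∑ i, φ a i * φ b i = if a = b then (1 : ℝ) else 0) (x : Fin n → ℝ) :
    ∑ i, (x i)^2 = ∑ a, (∑ i, x i * φ a i)^2 := by
  have hc := orth_complete φ horth
  symm
  calc ∑ a, (∑ i, x i * φ a i)^2
      = ∑ a, ∑ i, ∑ j, (x i * φ a i) * (x j * φ a j) := by
        congr 1; ext a
        rw [sq, Finset.sum_mul_sum]
    _ = ∑ i, ∑ a, ∑ j, (x i * φ a i) * (x j * φ a j) := by rw [Finset.sum_comm]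
    _ = ∑ i, ∑ j, ∑ a, (x i * φ a i) * (x j * φ a j) := by
        congr 1; ext i; rw [Finset.sum_comm]
    _ = ∑ i, ∑ j, (x i * x j) * ∑ a, φ a i * φ a j := by
        congr 1; ext i; congr 1; ext j; rw [Finset.mul_sum]; congr 1; ext a; ring
    _ = ∑ i, (x i)^2 := by
        congr 1; ext i
        simp only [hc]
        rw [Finset.sum_eq_single i]
        · simp [sq]
        · intro b _ hb; simp [Ne.symm hb]
        · intro h; simp at h


lemma perron_const {n d : ℕ} (G : SimpleGraph (Fin n)) [DecidableRel G.Adj]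
    (hconn : G.Connected) (hreg : G.IsRegularOfDegree d) (f : Fin n → ℝ)
    (hf : ∀ v, ∑ u ∈ G.neighborFinset v, f u = d * f v) (v w : Fin n) : f v = f w := by
  have hne : (Finset.univ : Finset (Fin n)).Nonempty := ⟨v, Finset.mem_univ v⟩
  obtain ⟨v₀, -, hv₀⟩ := Finset.exists_max_image Finset.univ f hne
  set m := f v₀ with hm
  have step : ∀ u u', f u = m → G.Adj u u' → f u' = m := by
    intro u u' hu hadj
    have hcard : #(G.neighborFinset u) = d := hreg u
    have hsum : ∑ z ∈ G.neighborFinset u, (m - f z) = 0 := by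
      rw [Finset.sum_sub_distrib, hf u, hu, Finset.sum_const, hcard, nsmul_eq_mul]
      ring
    have hz : ∀ z ∈ G.neighborFinset u, m - f z = 0 := by
      refine (Finset.sum_eq_zero_iff_of_nonneg ?_).mp hsum
      intro z _; have := hv₀ z (Finset.mem_univ z); linarith
    have hu' : u' ∈ G.neighborFinset u := by
      rw [SimpleGraph.mem_neighborFinset]; exact hadj
    have := hz u' hu'; linarith
  have reach : ∀ (a b : Fin n) (p : G.Walk a b), f a = m → f b = m := by
    intro a b p
    induction p with
    | nil => intro h; exact h
    | cons h p ih => intro ha; exact ih (step _ _ ha h)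
  obtain ⟨p⟩ := hconn.preconnected v₀ v
  obtain ⟨q⟩ := hconn.preconnected v₀ w
  rw [reach _ _ p rfl, reach _ _ q rfl]

lemma M_decomp {n : ℕ} (M : Matrix (Fin n) (Fin n) ℝ) (μ : Fin n → ℝ) (φ : Fin n → Fin n → ℝ)
    (horth : ∀ a b, ∑ i, φ a i * φ b i = if a = b then (1 : ℝ) else 0)
    (heig : ∀ a, M.mulVec (φ a) = μ a • φ a) :
    ∀ i j, M i j = ∑ a, μ a * φ a i * φ a j := by
  intro i j
  have hc := orth_complete φ horth
  have h1 : M i j = ∑ j', M i j' * ∑ a, φ a j' * φ a j := by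
    have h2 : ∀ j', (∑ a, φ a j' * φ a j) = if j' = j then (1:ℝ) else 0 := fun j' => hc j' j
    simp only [h2]
    simp [mul_ite]
  rw [h1]
  simp only [Finset.mul_sum]
  rw [Finset.sum_comm]
  congr 1; ext a
  have hma : ∀ i', ∑ j', M i' j' * φ a j' = μ a * φ a i' := by
    intro i'
    have := congrFun (heig a) i'
    simpa [Matrix.mulVec, dotProduct, smul_eq_mul] using this
  calc ∑ j', M i j' * (φ a j' * φ a j) = (∑ j', M i j' * φ a j') * φ a j := by
        rw [Finset.sum_mul]; congr 1; ext j'; ring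
    _ = μ a * φ a i * φ a j := by rw [hma i]

lemma quad_decomp {n : ℕ} (M : Matrix (Fin n) (Fin n) ℝ) (μ : Fin n → ℝ) (φ : Fin n → Fin n → ℝ)
    (horth : ∀ a b, ∑ i, φ a i * φ b i = if a = b then (1 : ℝ) else 0)
    (heig : ∀ a, M.mulVec (φ a) = μ a • φ a) (x : Fin n → ℝ) :
    ∑ i, ∑ j, M i j * x i * x j = ∑ a, μ a * (∑ i, x i * φ a i)^2 := by
  have hd := M_decomp M μ φ horth heig
  calc ∑ i, ∑ j, M i j * x i * x j
      = ∑ i, ∑ j, ∑ a, μ a * (x i * φ a i) * (x j * φ a j) := by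
        congr 1; ext i; congr 1; ext j; rw [hd i j, Finset.sum_mul, Finset.sum_mul]
        congr 1; ext a; ring
    _ = ∑ i, ∑ a, ∑ j, μ a * (x i * φ a i) * (x j * φ a j) := by
        congr 1; ext i; rw [Finset.sum_comm]
    _ = ∑ a, ∑ i, ∑ j, μ a * (x i * φ a i) * (x j * φ a j) := by
        rw [Finset.sum_comm]
    _ = ∑ a, μ a * (∑ i, x i * φ a i)^2 := by
        congr 1; ext a
        rw [sq, Finset.sum_mul_sum, Finset.mul_sum]
        congr 1; ext i
        rw [Finset.mul_sum]
        congr 1; ext j; ring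


lemma spectral_bound {n d : ℕ} (hd : 0 < d) (hn : 2 ≤ n)
    (G : SimpleGraph (Fin n)) [DecidableRel G.Adj] (hconn : G.Connected)
    (hreg : G.IsRegularOfDegree d)
    (μ : Fin n → ℝ) (φ : Fin n → Fin n → ℝ)
    (horth : ∀ a b, ∑ i, φ a i * φ b i = if a = b then (1 : ℝ) else 0)
    (heig : ∀ a, ((d : ℝ)⁻¹ • G.adjMatrix ℝ).mulVec (φ a) = μ a • φ a)
    (hsort : ∀ a b : Fin n, a ≤ b → μ b ≤ μ a)
    (lam : ℝ) (hlam1 : |μ ⟨1, Nat.lt_of_lt_of_le Nat.one_lt_two hn⟩| ≤ lam)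
    (x : Fin n → ℝ) (hx : ∑ i, x i = 0) :
    ∑ i, ∑ j, ((d : ℝ)⁻¹ • G.adjMatrix ℝ) i j * x i * x j ≤ lam * ∑ i, (x i)^2 := by
  set M : Matrix (Fin n) (Fin n) ℝ := (d : ℝ)⁻¹ • G.adjMatrix ℝ with hM
  have hd' : (0:ℝ) < d := by exact_mod_cast hd
  have hadjrow : ∀ i, ∑ j, (G.adjMatrix ℝ) i j = (d : ℝ) := by
    intro i
    have h1 : ∑ j, (G.adjMatrix ℝ) i j = ((G.neighborFinset i).card : ℝ) := by
      simp [SimpleGraph.adjMatrix_apply, SimpleGraph.neighborFinset_eq_filter, Finset.sum_boole]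
    rw [h1]; exact_mod_cast hreg i
  have hrow : ∀ i, ∑ j, M i j = 1 := by
    intro i
    simp only [hM, Matrix.smul_apply, smul_eq_mul, ← Finset.mul_sum, hadjrow]
    field_simp
  have hmv : ∀ (f : Fin n → ℝ) (v : Fin n), (M.mulVec f) v = (d:ℝ)⁻¹ * ∑ u ∈ G.neighborFinset v, f u := by
    intro f v
    simp only [hM]
    rw [Matrix.smul_mulVec]
    simp [SimpleGraph.adjMatrix_mulVec_apply]
  have habs : ∀ a, |μ a| ≤ 1 := by
    intro a
    have hnorm : ∑ i, φ a i * φ a i = 1 := by simpa using horth a a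
    have hne : ∃ i, φ a i ≠ 0 := by
      by_contra h
      push_neg at h
      rw [Finset.sum_eq_zero (fun i _ => by rw [h i]; ring)] at hnorm
      norm_num at hnorm
    obtain ⟨i₀, -, hi₀⟩ := Finset.exists_max_image Finset.univ (fun i => |φ a i|)
      ⟨⟨0, by omega⟩, Finset.mem_univ _⟩
    have hpos : 0 < |φ a i₀| := by
      obtain ⟨i, hi⟩ := hne
      have h2 : 0 < |φ a i| := abs_pos.mpr hi
      linarith [hi₀ i (Finset.mem_univ i)]
    have heq : (M.mulVec (φ a)) i₀ = μ a * φ a i₀ := by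
      rw [heig a]; simp
    have hMnn : ∀ i j, 0 ≤ M i j := by
      intro i j
      simp only [hM, Matrix.smul_apply, smul_eq_mul]
      have : (0:ℝ) ≤ (G.adjMatrix ℝ) i j := by
        simp only [SimpleGraph.adjMatrix_apply]; split <;> norm_num
      positivity
    have hbound : |μ a * φ a i₀| ≤ |φ a i₀| := by
      rw [← heq]
      have h3 : (M.mulVec (φ a)) i₀ = ∑ j, M i₀ j * φ a j := by
        simp [Matrix.mulVec, dotProduct]
      rw [h3]
      calc |∑ j, M i₀ j * φ a j| ≤ ∑ j, |M i₀ j * φ a j| := Finset.abs_sum_le_sum_abs _ _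
        _ ≤ ∑ j, M i₀ j * |φ a i₀| := by
            refine Finset.sum_le_sum fun j _ => ?_
            rw [abs_mul, abs_of_nonneg (hMnn i₀ j)]
            exact mul_le_mul_of_nonneg_left (hi₀ j (Finset.mem_univ j)) (hMnn i₀ j)
        _ = |φ a i₀| := by rw [← Finset.sum_mul, hrow, one_mul]
    rw [abs_mul] at hbound
    exact le_of_mul_le_mul_right (by linarith [hbound]) hpos
  have hcol : ∀ j, ∑ i, M i j = 1 := by
    intro j
    have hsymm : ∀ i, M i j = M j i := by
      intro i; simp [hM, SimpleGraph.adjMatrix_apply, SimpleGraph.adj_comm]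
    simp only [hsymm]
    exact hrow j
  have hex : ∃ a, μ a = 1 := by
    set b : Fin n → ℝ := fun a => ∑ i, φ a i with hb
    have hkey : ∀ a, μ a * b a = b a := by
      intro a
      have h1 : ∑ i, (M.mulVec (φ a)) i = μ a * b a := by
        rw [heig a]; simp [hb, Finset.mul_sum]
      have h2 : ∑ i, (M.mulVec (φ a)) i = b a := by
        simp only [Matrix.mulVec, dotProduct]
        rw [Finset.sum_comm]
        simp only [hb]
        congr 1; ext j
        rw [show (∑ i, M i j * φ a j) = (∑ i, M i j) * φ a j from (Finset.sum_mul _ _ _).symm,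
          hcol j, one_mul]
      rw [← h1, h2]
    have hbsum : ∑ a, (b a)^2 = (n : ℝ) := by
      have h := norm_decomp φ horth (fun _ => 1)
      simp only [one_pow, one_mul] at h
      rw [Finset.sum_const, Finset.card_univ, Fintype.card_fin, nsmul_eq_mul, mul_one] at h
      rw [← h]
    have hbne : ∃ a, b a ≠ 0 := by
      by_contra h
      push_neg at h
      rw [Finset.sum_eq_zero (fun a _ => by rw [h a]; ring)] at hbsum
      have hnpos : (0:ℝ) < n := by positivity
      linarith
    obtain ⟨a, ha⟩ := hbne
    refine ⟨a, ?_⟩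
    have h4 : (μ a - 1) * b a = 0 := by linarith [hkey a]
    rcases mul_eq_zero.mp h4 with h | h
    · linarith
    · exact absurd h ha
  -- μ 0 = 1 and φ 0 is constant
  obtain ⟨a1, ha1⟩ := hex
  have hzero_le : (⟨0, by omega⟩ : Fin n) ≤ a1 := by
    simp [Fin.le_def]
  have hmu0 : μ ⟨0, by omega⟩ = 1 := by
    have h1 := hsort _ _ hzero_le
    have h2 := habs ⟨0, by omega⟩
    rw [ha1] at h1
    rw [abs_le] at h2
    linarith
  have hphi0 : ∀ v w, φ ⟨0, by omega⟩ v = φ ⟨0, by omega⟩ w := by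
    have heig0 : M.mulVec (φ ⟨0, by omega⟩) = φ ⟨0, by omega⟩ := by
      rw [heig, hmu0, one_smul]
    have hf : ∀ v, ∑ u ∈ G.neighborFinset v, φ ⟨0, by omega⟩ u = d * φ ⟨0, by omega⟩ v := by
      intro v
      have := congrFun heig0 v
      rw [hmv] at this
      field_simp at this
      linarith [this]
    exact fun v w => perron_const G hconn hreg _ hf v w
    -- finish
  set c : Fin n → ℝ := fun a => ∑ i, x i * φ a i with hc
  have hc0 : c ⟨0, by omega⟩ = 0 := by
    have : ∀ i, φ ⟨0, by omega⟩ i = φ ⟨0, by omega⟩ ⟨0, by omega⟩ := fun i => hphi0 i _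
    simp only [hc]
    calc ∑ i, x i * φ ⟨0, by omega⟩ i = ∑ i, x i * φ ⟨0, by omega⟩ ⟨0, by omega⟩ := by
          congr 1; ext i; rw [this i]
      _ = (∑ i, x i) * φ ⟨0, by omega⟩ ⟨0, by omega⟩ := by rw [Finset.sum_mul]
      _ = 0 := by rw [hx, zero_mul]
  have hlam0 : 0 ≤ lam := le_trans (abs_nonneg _) hlam1
  have hpt : ∀ a : Fin n, μ a * (c a)^2 ≤ lam * (c a)^2 := by
    intro a
    by_cases h0 : a = ⟨0, by omega⟩
    · rw [h0, hc0]; simp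
    · have h1a : (⟨1, by omega⟩ : Fin n) ≤ a := by
        have hv : a.val ≠ 0 := fun h => h0 (Fin.ext h)
        show (1:ℕ) ≤ a.val
        omega
      have : μ a ≤ lam := le_trans (hsort _ _ h1a) (le_trans (le_abs_self _) hlam1)
      exact mul_le_mul_of_nonneg_right this (sq_nonneg _)
  calc ∑ i, ∑ j, M i j * x i * x j = ∑ a, μ a * (c a)^2 :=
        quad_decomp M μ φ horth heig x
    _ ≤ ∑ a, lam * (c a)^2 := Finset.sum_le_sum (fun a _ => hpt a)
    _ = lam * ∑ a, (c a)^2 := by rw [Finset.mul_sum]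
    _ = lam * ∑ i, (x i)^2 := by rw [← norm_decomp φ horth x]

def QF {n : ℕ} (G : SimpleGraph (Fin n)) [DecidableRel G.Adj]
    (W : Finset (Fin n)) (x : Fin n → ℝ) : ℝ :=
  ∑ u ∈ W, ∑ v ∈ W, (if G.Adj u v then (x u - x v)^2 else 0)

def FP {n : ℕ} (G : SimpleGraph (Fin n)) [DecidableRel G.Adj]
    (W : Finset (Fin n)) (c : ℝ) : Prop :=
  ∀ x : Fin n → ℝ, (∀ u ∉ W, x u = 0) → (∑ u ∈ W, x u = 0) →
    c * ∑ u ∈ W, (x u)^2 ≤ QF G W x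
lemma fiedler_step {n : ℕ} (G : SimpleGraph (Fin n)) [DecidableRel G.Adj] (W : Finset (Fin n)) (c : ℝ) (v : Fin n) (h : FP G W c) :
    FP G (W.erase v) (c - 2) := by
  intro x hx1 hx2
  have hxv : x v = 0 := hx1 v (Finset.notMem_erase v W)
  have hx1' : ∀ u ∉ W, x u = 0 := fun u hu => hx1 u (fun h' => hu (Finset.mem_of_mem_erase h'))
  have hsqe : ∑ u ∈ W.erase v, (x u)^2 ≤ ∑ u ∈ W, (x u)^2 := by
    by_cases hv : v ∈ W
    · rw [← Finset.add_sum_erase W _ hv, hxv]; norm_num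
    · rw [Finset.erase_eq_of_notMem hv]
  by_cases hv : v ∈ W
  · have hsum : ∑ u ∈ W, x u = 0 := by
      rw [← Finset.add_sum_erase W _ hv, hxv, hx2, add_zero]
    have hsq : ∑ u ∈ W, (x u)^2 = ∑ u ∈ W.erase v, (x u)^2 := by
      rw [← Finset.add_sum_erase W _ hv, hxv]; norm_num
    have hQ : QF G W x ≤ QF G (W.erase v) x + 2 * ∑ u ∈ W.erase v, (x u)^2 := by
      unfold QF
      have hW : W = insert v (W.erase v) := (Finset.insert_erase hv).symm
      have hvni : v ∉ W.erase v := Finset.notMem_erase v W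
      rw [hW, Finset.sum_insert hvni, Finset.erase_insert hvni]
      have hinner : ∀ u, ∑ w ∈ insert v (W.erase v), (if G.Adj u w then (x u - x w)^2 else 0)
          = (if G.Adj u v then (x u - x v)^2 else 0)
            + ∑ w ∈ W.erase v, (if G.Adj u w then (x u - x w)^2 else 0) :=
        fun u => Finset.sum_insert hvni
      simp only [hinner]
      have h1 : (if G.Adj v v then (x v - x v)^2 else 0) = 0 := by simp
      have h2 : ∑ w ∈ W.erase v, (if G.Adj v w then (x v - x w)^2 else 0)
          ≤ ∑ w ∈ W.erase v, (x w)^2 := by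
        refine Finset.sum_le_sum fun w _ => ?_
        split
        · rw [hxv]; ring_nf; exact le_refl _
        · positivity
      have h3 : ∑ u ∈ W.erase v, (if G.Adj u v then (x u - x v)^2 else 0)
          ≤ ∑ u ∈ W.erase v, (x u)^2 := by
        refine Finset.sum_le_sum fun u _ => ?_
        split
        · rw [hxv]; ring_nf; exact le_refl _
        · positivity
      rw [Finset.sum_add_distrib]
      linarith
    have hc := h x hx1' hsum
    rw [hsq] at hc
    linarith
  · rw [Finset.erase_eq_of_notMem hv] at *
    have hc := h x hx1' hx2
    have hnn : 0 ≤ ∑ u ∈ W, (x u)^2 := Finset.sum_nonneg fun u _ => sq_nonneg _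
    nlinarith
lemma fiedler_all {n : ℕ} (G : SimpleGraph (Fin n)) [DecidableRel G.Adj] (c0 : ℝ) (hbase : FP G Finset.univ c0) :
    ∀ R : Finset (Fin n), FP G Rᶜ (c0 - 2 * R.card) := by
  intro R
  induction R using Finset.induction_on with
  | empty => simpa using hbase
  | insert v R hv ih =>
    rw [Finset.compl_insert]
    have := fiedler_step G Rᶜ (c0 - 2 * R.card) v ih
    have hcard : ((insert v R).card : ℝ) = R.card + 1 := by
      rw [Finset.card_insert_of_notMem hv]; push_cast; ring
    have heq : c0 - 2 * ((R.card : ℝ) + 1) = (c0 - 2 * R.card) - 2 := by ring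
    rw [hcard, heq]
    exact this

lemma fiedler_base {n : ℕ} (G : SimpleGraph (Fin n)) [DecidableRel G.Adj] (d : ℕ) (lam : ℝ)
    (hrow : ∀ i, ∑ j, (G.adjMatrix ℝ) i j = (d : ℝ))
    (hcol : ∀ j, ∑ i, (G.adjMatrix ℝ) i j = (d : ℝ))
    (hQA : ∀ x : Fin n → ℝ, ∑ i, x i = 0 →
      ∑ i, ∑ j, (G.adjMatrix ℝ) i j * x i * x j ≤ lam * (d : ℝ) * ∑ i, (x i)^2) :
    FP G Finset.univ (2 * ((1 - lam) * d)) := by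
  intro x _ hx
  set A := G.adjMatrix ℝ with hA
  have expand : QF G Finset.univ x
      = ∑ u, ∑ v, (A u v * (x u)^2 + A u v * (x v)^2 - 2 * (A u v * x u * x v)) := by
    unfold QF
    congr 1; ext u; congr 1; ext v
    by_cases h : G.Adj u v
    · simp only [hA, SimpleGraph.adjMatrix_apply, h, if_true]; ring
    · simp only [hA, SimpleGraph.adjMatrix_apply, h, if_false]; ring
  have e1 : ∑ u, ∑ v, A u v * (x u)^2 = (d : ℝ) * ∑ u, (x u)^2 := by
    rw [Finset.mul_sum]
    congr 1; ext u
    rw [← Finset.sum_mul, hrow u]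
  have e2 : ∑ u, ∑ v, A u v * (x v)^2 = (d : ℝ) * ∑ v, (x v)^2 := by
    rw [Finset.sum_comm, Finset.mul_sum]
    congr 1; ext v
    rw [← Finset.sum_mul, hcol v]
  have e3 := hQA x hx
  have esplit : QF G Finset.univ x
      = (∑ u, ∑ v, A u v * (x u)^2) + (∑ u, ∑ v, A u v * (x v)^2)
        - 2 * ∑ u, ∑ v, A u v * x u * x v := by
    rw [expand]
    rw [Finset.mul_sum]
    rw [← Finset.sum_add_distrib, ← Finset.sum_sub_distrib]
    congr 1; ext u
    rw [Finset.mul_sum, ← Finset.sum_add_distrib, ← Finset.sum_sub_distrib]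
  rw [esplit, e1, e2]
  nlinarith [Finset.sum_nonneg (fun u (_ : u ∈ Finset.univ) => sq_nonneg (x u))]

/-- Every `(d,λ)`-expander graph `G` (an undirected connected
`d`-regular graph with spectral expansion at most `λ`) has vertex connectivity
`κ(G) ≥ (1 − λ) d`: every vertex cut `K` (a set of vertices whose removal
disconnects `G` or leaves at most one vertex) has size at least `(1 − λ) d`. -/
theorem stmt_7 (n d : ℕ) (hd : 0 < d) (hn : 2 ≤ n)
    (G : SimpleGraph (Fin n)) [DecidableRel G.Adj] (hconn : G.Connected)
    (hreg : G.IsRegularOfDegree d)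
    (μ : Fin n → ℝ) (φ : Fin n → Fin n → ℝ)
    (hA : EigSystem ((d : ℝ)⁻¹ • G.adjMatrix ℝ) μ φ)
    (lam : ℝ) (hlam : max |μ ⟨1, by omega⟩| |μ ⟨n - 1, by omega⟩| ≤ lam)
    (K : Finset (Fin n))
    (hcut : ¬ (G.induce {v : Fin n | v ∉ K}).Connected ∨ Kᶜ.card ≤ 1) :
    (1 - lam) * d ≤ (K.card : ℝ) := by
  obtain ⟨-, horth, heig, hsort⟩ := hA
  classical
  have hlam1 : |μ ⟨1, by omega⟩| ≤ lam := le_trans (le_max_left _ _) hlam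
  have hlam0 : 0 ≤ lam := le_trans (abs_nonneg _) hlam1
  have hd' : (0:ℝ) < d := by exact_mod_cast hd
  have hdn : d < n := by
    have h1 := G.degree_lt_card_verts ⟨0, by omega⟩
    rw [hreg ⟨0, by omega⟩, Fintype.card_fin] at h1
    exact h1
  by_cases hK1 : Kᶜ.card ≤ 1
  · -- K misses at most one vertex, so |K| ≥ n-1 ≥ d
    have hcc : Kᶜ.card = n - K.card := by
      rw [Finset.card_compl, Fintype.card_fin]
    have hKn : K.card ≤ n := by
      simpa [Fintype.card_fin] using Finset.card_le_univ K
    have hdK : d ≤ K.card := by omega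
    have hdK' : (d : ℝ) ≤ K.card := by exact_mod_cast hdK
    nlinarith
  · push_neg at hK1
    have hnc : ¬ (G.induce {v : Fin n | v ∉ K}).Connected := hcut.resolve_right (by omega)
    set Ω : Set (Fin n) := {v : Fin n | v ∉ K} with hΩ
    set H := G.induce Ω with hH
    -- a pair of vertices in Kᶜ not reachable from each other in H
    have hne : Nonempty ↥Ω := by
      have : Kᶜ.Nonempty := Finset.card_pos.mp (by omega)
      obtain ⟨a, ha⟩ := this
      exact ⟨⟨a, Finset.mem_compl.mp ha⟩⟩
    haveI := hne
    have hnp : ¬ H.Preconnected := fun hp => hnc ⟨hp⟩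
    rw [SimpleGraph.Preconnected] at hnp
    push_neg at hnp
    obtain ⟨u, w, hr0⟩ := hnp
    set S : Finset (Fin n) := Kᶜ.filter (fun z => ∃ hz : z ∉ K, H.Reachable u ⟨z, hz⟩) with hS
    set T : Finset (Fin n) := Kᶜ \ S with hT
    have hSsub : S ⊆ Kᶜ := Finset.filter_subset _ _
    have hST : S ∪ T = Kᶜ := Finset.union_sdiff_of_subset hSsub
    have hdisj : Disjoint S T := Finset.disjoint_sdiff
    have huS : (u : Fin n) ∈ S := by
      rw [hS, Finset.mem_filter]
      refine ⟨Finset.mem_compl.mpr u.2, u.2, ?_⟩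
      rw [Subtype.coe_eta]
    have hwT : (w : Fin n) ∈ T := by
      rw [hT, Finset.mem_sdiff]
      refine ⟨Finset.mem_compl.mpr w.2, ?_⟩
      rw [hS, Finset.mem_filter]
      rintro ⟨-, hz, hr⟩
      rw [Subtype.coe_eta] at hr
      exact hr0 hr
    have hedge : ∀ z ∈ S, ∀ y ∈ T, ¬ G.Adj z y := by
      intro z hz y hy hadj
      rw [hS, Finset.mem_filter] at hz
      obtain ⟨-, hzK, hzr⟩ := hz
      rw [hT, Finset.mem_sdiff] at hy
      obtain ⟨hyc, hyS⟩ := hy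
      have hyK : y ∉ K := Finset.mem_compl.mp hyc
      have hHadj : H.Adj ⟨z, hzK⟩ ⟨y, hyK⟩ := by
        rw [hH]
        exact hadj
      exact hyS (by
        rw [hS, Finset.mem_filter]
        exact ⟨hyc, hyK, hzr.trans hHadj.reachable⟩)
    -- the test vector
    set x : Fin n → ℝ := fun z => if z ∈ S then (T.card : ℝ) else if z ∈ T then -(S.card : ℝ) else 0
      with hx
    have hsupp : ∀ z ∉ Kᶜ, x z = 0 := by
      intro z hz
      have h1 : z ∉ S := fun h => hz (hSsub h)
      have h2 : z ∉ T := fun h => hz (Finset.mem_sdiff.mp h).1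
      simp [hx, h1, h2]
    have hxS : ∀ z ∈ S, x z = (T.card : ℝ) := fun z hz => by simp [hx, hz]
    have hxT : ∀ z ∈ T, x z = -(S.card : ℝ) := by
      intro z hz
      have h1 : z ∉ S := Finset.disjoint_right.mp hdisj hz
      simp [hx, h1, hz]
    have hsumx : ∑ z ∈ Kᶜ, x z = 0 := by
      rw [← hST, Finset.sum_union hdisj, Finset.sum_congr rfl hxS, Finset.sum_congr rfl hxT,
        Finset.sum_const, Finset.sum_const, nsmul_eq_mul, nsmul_eq_mul]
      ring
    have hScard : 0 < S.card := Finset.card_pos.mpr ⟨u, huS⟩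
    have hTcard : 0 < T.card := Finset.card_pos.mpr ⟨w, hwT⟩
    have hsqS : ∑ z ∈ S, (x z)^2 = (S.card : ℝ) * (T.card : ℝ)^2 := by
      calc ∑ z ∈ S, (x z)^2 = ∑ _z ∈ S, ((T.card : ℝ))^2 :=
            Finset.sum_congr rfl (fun z hz => by rw [hxS z hz])
        _ = (S.card : ℝ) * (T.card : ℝ)^2 := by rw [Finset.sum_const, nsmul_eq_mul]
    have hsqT : ∑ z ∈ T, (x z)^2 = (T.card : ℝ) * (S.card : ℝ)^2 := by
      calc ∑ z ∈ T, (x z)^2 = ∑ _z ∈ T, ((S.card : ℝ))^2 :=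
            Finset.sum_congr rfl (fun z hz => by rw [hxT z hz]; ring)
        _ = (T.card : ℝ) * (S.card : ℝ)^2 := by rw [Finset.sum_const, nsmul_eq_mul]
    have hsq : ∑ z ∈ Kᶜ, (x z)^2
        = (S.card : ℝ) * (T.card : ℝ)^2 + (T.card : ℝ) * (S.card : ℝ)^2 := by
      rw [← hST, Finset.sum_union hdisj, hsqS, hsqT]
    have hsqpos : 0 < ∑ z ∈ Kᶜ, (x z)^2 := by
      rw [hsq]
      have h1 : (0:ℝ) < S.card := by exact_mod_cast hScard
      have h2 : (0:ℝ) < T.card := by exact_mod_cast hTcard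
      exact add_pos (mul_pos h1 (pow_pos h2 2)) (mul_pos h2 (pow_pos h1 2))
    have hQ0 : QF G Kᶜ x = 0 := by
      unfold QF
      refine Finset.sum_eq_zero fun a ha => Finset.sum_eq_zero fun b hb => ?_
      rw [← hST, Finset.mem_union] at ha hb
      rcases ha with ha | ha <;> rcases hb with hb | hb
      · rw [hxS a ha, hxS b hb]; simp
      · rw [if_neg (hedge a ha b hb)]
      · rw [if_neg (fun h => (hedge b hb a ha) h.symm)]
      · rw [hxT a ha, hxT b hb]; simp
    -- spectral input for the base case
    have hadjrow : ∀ i, ∑ j, (G.adjMatrix ℝ) i j = (d : ℝ) := by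
      intro i
      have h1 : ∑ j, (G.adjMatrix ℝ) i j = ((G.neighborFinset i).card : ℝ) := by
        simp [SimpleGraph.adjMatrix_apply, SimpleGraph.neighborFinset_eq_filter, Finset.sum_boole]
      rw [h1]; exact_mod_cast hreg i
    have hadjcol : ∀ j, ∑ i, (G.adjMatrix ℝ) i j = (d : ℝ) := by
      intro j
      have h1 : ∀ i, (G.adjMatrix ℝ) i j = (G.adjMatrix ℝ) j i := by
        intro i; simp [SimpleGraph.adjMatrix_apply, SimpleGraph.adj_comm]
      simp only [h1]
      exact hadjrow j
    have hQA : ∀ y : Fin n → ℝ, ∑ i, y i = 0 →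
        ∑ i, ∑ j, (G.adjMatrix ℝ) i j * y i * y j ≤ lam * (d : ℝ) * ∑ i, (y i)^2 := by
      intro y hy
      have hsb := spectral_bound hd hn G hconn hreg μ φ horth heig hsort lam hlam1 y hy
      have hAM : ∀ i j, (G.adjMatrix ℝ) i j * y i * y j
          = (d:ℝ) * (((d : ℝ)⁻¹ • G.adjMatrix ℝ) i j * y i * y j) := by
        intro i j
        simp only [Matrix.smul_apply, smul_eq_mul]
        field_simp
      calc ∑ i, ∑ j, (G.adjMatrix ℝ) i j * y i * y j
          = (d:ℝ) * ∑ i, ∑ j, ((d : ℝ)⁻¹ • G.adjMatrix ℝ) i j * y i * y j := by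
            rw [Finset.mul_sum]
            congr 1; ext i
            rw [Finset.mul_sum]
            congr 1; ext j
            exact hAM i j
        _ ≤ (d:ℝ) * (lam * ∑ i, (y i)^2) := by
            exact mul_le_mul_of_nonneg_left hsb (le_of_lt hd')
        _ = lam * (d : ℝ) * ∑ i, (y i)^2 := by ring
    have hbase := fiedler_base G d lam hadjrow hadjcol hQA
    have hfin := fiedler_all G _ hbase K x hsupp hsumx
    rw [hQ0] at hfin
    nlinarith
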